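/- Let μ be the standard Gaussian measure on ℝⁿ, given by μ(A) = (2π)^{-n/2} ∫_A e^{-|x|²/2} dλ(x) with λ the Lebesgue measure, and let B_rⁿ be the closed Euclidean ball of radius r > 0 centered at the origin. Then μ(B_rⁿ) ≤ (√e · r / √n)ⁿ. -/

import Mathlib

open Real Set MeasureTheory ENNReal

noncomputable section

/-- The standard Gaussian measure on `ℝⁿ`, with density `(2π)^{-n/2} e^{-|x|²/2}` with
respect to Lebesgue measure. -/
def gaussianMeasure (n : ℕ) : Measure (EuclideanSpace ℝ (Fin n)) :=
  volume.withDensity fun x =>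
    ENNReal.ofReal ((2 * π) ^ (-(n : ℝ) / 2) * Real.exp (-‖x‖ ^ 2 / 2))

lemma integrable_aux (n : ℕ) {b : ℝ} (hb : 0 < b) :
    Integrable (fun x : EuclideanSpace ℝ (Fin n) => Real.exp (-b * ‖x‖ ^ 2)) := by
  have h := (GaussianFourier.integrable_cexp_neg_mul_sq_norm_add
    (V := EuclideanSpace ℝ (Fin n)) (b := (b : ℂ)) (by simpa using hb) 0 0).norm
  refine h.congr (Filter.Eventually.of_forall fun x => ?_)
  simp only [Complex.norm_exp]
  norm_num
  left
  rw [← Complex.ofReal_pow, Complex.ofReal_re]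

lemma key_ineq (n : ℕ) (hn : 1 ≤ n) (r : ℝ) (hr : 0 < r) :
    Real.exp ((max 1 ((n : ℝ) / r ^ 2) - 1) * r ^ 2 / 2) *
      ((2 * π) ^ (-(n : ℝ) / 2) * (π / (max 1 ((n : ℝ) / r ^ 2) / 2)) ^ ((n : ℝ) / 2)) ≤
    (Real.sqrt (Real.exp 1) * r / Real.sqrt n) ^ n := by
  have hn0 : (0 : ℝ) < n := by exact_mod_cast hn
  set t : ℝ := max 1 ((n : ℝ) / r ^ 2) with ht
  have ht1 : (1 : ℝ) ≤ t := le_max_left _ _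
  have ht0 : (0 : ℝ) < t := lt_of_lt_of_le one_pos ht1
  have hπ : (0 : ℝ) < 2 * π := by positivity
  -- simplify the powers of 2π
  have h1 : π / (t / 2) = (2 * π) / t := by ring
  have h2 : (2 * π) ^ (-(n : ℝ) / 2) * ((2 * π) / t) ^ ((n : ℝ) / 2)
      = t ^ (-((n : ℝ) / 2)) := by
    have ha : (2 * π) ^ ((n : ℝ) / 2) ≠ 0 := (Real.rpow_pos_of_pos hπ _).ne'
    have hb : t ^ ((n : ℝ) / 2) ≠ 0 := (Real.rpow_pos_of_pos ht0 _).ne'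
    rw [Real.div_rpow (by positivity) ht0.le, neg_div, Real.rpow_neg hπ.le,
      Real.rpow_neg ht0.le]
    field_simp
  -- rewrite RHS as an rpow
  have hrhs : (Real.sqrt (Real.exp 1) * r / Real.sqrt n) ^ n
      = (Real.exp 1 * r ^ 2 / n) ^ ((n : ℝ) / 2) := by
    have : Real.sqrt (Real.exp 1) * r / Real.sqrt n
        = Real.sqrt (Real.exp 1 * r ^ 2 / n) := by
      rw [Real.sqrt_div' _ (by positivity), Real.sqrt_mul (Real.exp_pos 1).le,
        Real.sqrt_sq hr.le]
      try ring
    rw [this, Real.sqrt_eq_rpow, ← Real.rpow_natCast _ n, ← Real.rpow_mul (by positivity)]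
    try ring_nf
  rw [h1, h2, hrhs]
  rcases le_or_gt ((n : ℝ) / r ^ 2) 1 with h | h
  · -- t = 1
    have htt : t = 1 := max_eq_left h
    rw [htt]
    simp only [sub_self, zero_mul, zero_div, Real.exp_zero, one_mul, Real.one_rpow]
    apply Real.one_le_rpow _ (by positivity)
    have hrn : (n : ℝ) ≤ r ^ 2 := by
      rw [div_le_one (by positivity)] at h; exact h
    calc (1 : ℝ) ≤ Real.exp 1 * 1 := by
          rw [mul_one]; linarith [Real.add_one_le_exp 1]
      _ ≤ Real.exp 1 * (r ^ 2 / n) := by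
          apply mul_le_mul_of_nonneg_left _ (Real.exp_pos 1).le
          rw [le_div_iff₀ hn0, one_mul]; exact hrn
      _ = Real.exp 1 * r ^ 2 / n := by ring
  · -- t = n / r²
    have htt : t = (n : ℝ) / r ^ 2 := max_eq_right h.le
    have hrn : r ^ 2 < (n : ℝ) := by
      rw [lt_div_iff₀ (by positivity), one_mul] at h; exact h
    have h3 : Real.exp 1 * r ^ 2 / n = Real.exp 1 * (r ^ 2 / n) := by ring
    rw [h3, Real.mul_rpow (Real.exp_pos 1).le (by positivity),
      Real.exp_one_rpow]
    have h4 : t ^ (-((n : ℝ) / 2)) = (r ^ 2 / n) ^ ((n : ℝ) / 2) := by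
      rw [htt, show (r ^ 2 / (n : ℝ)) = ((n : ℝ) / r ^ 2)⁻¹ by rw [inv_div],
        Real.inv_rpow (by positivity), ← Real.rpow_neg (by positivity)]
    rw [h4]
    apply mul_le_mul_of_nonneg_right _ (by positivity)
    rw [Real.exp_le_exp, htt]
    have : ((n : ℝ) / r ^ 2 - 1) * r ^ 2 / 2 = ((n : ℝ) - r ^ 2) / 2 := by
      field_simp
      try ring
    rw [this]
    nlinarith [sq_nonneg r, hr]

/-- The standard Gaussian measure of the closed Euclidean ball of radius
`r > 0` centered at the origin in `ℝⁿ` is at most `(√e · r / √n)ⁿ`. -/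
theorem gaussian_measure_ball_le
    (n : ℕ) (hn : 1 ≤ n) (r : ℝ) (hr : 0 < r) :
    gaussianMeasure n (Metric.closedBall (0 : EuclideanSpace ℝ (Fin n)) r) ≤
      ENNReal.ofReal ((Real.sqrt (Real.exp 1) * r / Real.sqrt n) ^ n) := by
  set t : ℝ := max 1 ((n : ℝ) / r ^ 2) with ht
  have ht1 : (1 : ℝ) ≤ t := le_max_left _ _
  have ht0 : (0 : ℝ) < t := lt_of_lt_of_le one_pos ht1
  set c : ℝ := (2 * π) ^ (-(n : ℝ) / 2) with hc
  have hc0 : 0 < c := by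
    apply Real.rpow_pos_of_pos; positivity
  set g : EuclideanSpace ℝ (Fin n) → ℝ :=
    fun x => Real.exp ((t - 1) * r ^ 2 / 2) * (c * Real.exp (-(t / 2) * ‖x‖ ^ 2)) with hg
  have hgi : Integrable g := by
    exact (((integrable_aux n (b := t / 2) (by positivity)).const_mul c).const_mul _)
  have step1 : gaussianMeasure n (Metric.closedBall (0 : EuclideanSpace ℝ (Fin n)) r)
      = ∫⁻ x in Metric.closedBall (0 : EuclideanSpace ℝ (Fin n)) r,
          ENNReal.ofReal (c * Real.exp (-‖x‖ ^ 2 / 2)) := by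
    rw [gaussianMeasure, withDensity_apply _ measurableSet_closedBall]
  have step2 : ∫⁻ x in Metric.closedBall (0 : EuclideanSpace ℝ (Fin n)) r,
      ENNReal.ofReal (c * Real.exp (-‖x‖ ^ 2 / 2)) ≤ ∫⁻ x, ENNReal.ofReal (g x) := by
    refine le_trans (setLIntegral_mono' measurableSet_closedBall ?_)
      (setLIntegral_le_lintegral _ _)
    intro x hx
    apply ENNReal.ofReal_le_ofReal
    rw [hg]
    have hxr : ‖x‖ ≤ r := by simpa using hx
    have hkey : -‖x‖ ^ 2 / 2 ≤ (t - 1) * r ^ 2 / 2 + -(t / 2) * ‖x‖ ^ 2 := by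
      nlinarith [sq_nonneg ‖x‖, norm_nonneg x, mul_le_mul_of_nonneg_left
        (mul_self_le_mul_self (norm_nonneg x) hxr) (sub_nonneg.2 ht1)]
    calc c * Real.exp (-‖x‖ ^ 2 / 2)
        ≤ c * Real.exp ((t - 1) * r ^ 2 / 2 + -(t / 2) * ‖x‖ ^ 2) := by
          exact mul_le_mul_of_nonneg_left (Real.exp_le_exp.2 hkey) hc0.le
      _ = Real.exp ((t - 1) * r ^ 2 / 2) * (c * Real.exp (-(t / 2) * ‖x‖ ^ 2)) := by
          rw [Real.exp_add]; ring
  have step3 : ∫⁻ x, ENNReal.ofReal (g x) = ENNReal.ofReal (∫ x, g x) := by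
    rw [← ofReal_integral_eq_lintegral_ofReal hgi]
    filter_upwards with x
    rw [hg]
    positivity
  have step4 : ∫ x, g x = Real.exp ((t - 1) * r ^ 2 / 2) *
      (c * (π / (t / 2)) ^ ((n : ℝ) / 2)) := by
    rw [hg]
    simp only [integral_const_mul]
    rw [GaussianFourier.integral_rexp_neg_mul_sq_norm (by positivity : (0:ℝ) < t / 2),
      finrank_euclideanSpace_fin]
  calc gaussianMeasure n (Metric.closedBall (0 : EuclideanSpace ℝ (Fin n)) r)
      ≤ ENNReal.ofReal (∫ x, g x) := by rw [step1, ← step3]; exact step2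
    _ ≤ ENNReal.ofReal ((Real.sqrt (Real.exp 1) * r / Real.sqrt n) ^ n) := by
        apply ENNReal.ofReal_le_ofReal
        rw [step4]
        simpa only [mul_assoc] using key_ineq n hn r hr
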